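/- Let F: ℝᴺ × ℝ → ℝᴺ be C¹ with F(ω*, 0) = 0 and D_ω F(ω*, 0) nonsingular, and suppose iterates ω_{k+1} and barrier parameters μ_k > 0 satisfy ‖F(ω_{k+1}, μ_k)‖ ≤ ε_k·μ_k with ε_k → 0 and ω_{k+1} → ω*, μ_k → 0. If moreover ∂F/∂μ(ω*, 0) ≠ 0 maps into the range appropriately so that ω̇ := −D_ωF(ω*,0)⁻¹ ∂_μF(ω*,0) ≠ 0, then ‖ω_{k+1} − ω*‖ = Θ(μ_k): there exist constants 0 < c₁ ≤ c₂ with c₁μ_k ≤ ‖ω_{k+1} − ω*‖ ≤ c₂μ_k for all k large. -/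

import Mathlib

open Filter Topology

set_option maxHeartbeats 1000000 in
theorem central_path_tight_estimate
    (N : ℕ)
    (F : EuclideanSpace ℝ (Fin N) × ℝ → EuclideanSpace ℝ (Fin N))
    (hF : ContDiff ℝ 1 F)
    (ωs : EuclideanSpace ℝ (Fin N))
    (hF0 : F (ωs, 0) = 0)
    (hDω : Function.Bijective (fderiv ℝ (fun ω => F (ω, 0)) ωs))
    -- nonvanishing central-path tangent: ∂_μ F(ω*,0) ≠ 0
    (hDμ : fderiv ℝ (fun μ : ℝ => F (ωs, μ)) 0 1 ≠ 0)
    (ω : ℕ → EuclideanSpace ℝ (Fin N)) (μ ε : ℕ → ℝ)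
    (hμpos : ∀ k, 0 < μ k)
    (hres : ∀ k, ‖F (ω (k + 1), μ k)‖ ≤ ε k * μ k)
    (hε : Tendsto ε atTop (𝓝 0))
    (hωconv : Tendsto ω atTop (𝓝 ωs))
    (hμconv : Tendsto μ atTop (𝓝 0)) :
    ∃ c₁ c₂ : ℝ, 0 < c₁ ∧ c₁ ≤ c₂ ∧
      ∃ K : ℕ, ∀ k ≥ K,
        c₁ * μ k ≤ ‖ω (k + 1) - ωs‖ ∧ ‖ω (k + 1) - ωs‖ ≤ c₂ * μ k := by
  classical
  have hdiff : Differentiable ℝ F := hF.differentiable one_ne_zero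
  set p₀ : EuclideanSpace ℝ (Fin N) × ℝ := (ωs, 0) with hp₀def
  set L : (EuclideanSpace ℝ (Fin N) × ℝ) →L[ℝ] EuclideanSpace ℝ (Fin N) :=
    fderiv ℝ F p₀ with hLdef
  have hFd : HasFDerivAt F L p₀ := (hdiff p₀).hasFDerivAt
  -- partial derivative in ω
  have hA : HasFDerivAt (fun x : EuclideanSpace ℝ (Fin N) => F (x, 0))
      (L.comp (ContinuousLinearMap.inl ℝ (EuclideanSpace ℝ (Fin N)) ℝ)) ωs :=
    hFd.comp ωs (hasFDerivAt_prodMk_left ωs (0 : ℝ))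
  set A : EuclideanSpace ℝ (Fin N) →L[ℝ] EuclideanSpace ℝ (Fin N) :=
    L.comp (ContinuousLinearMap.inl ℝ (EuclideanSpace ℝ (Fin N)) ℝ) with hAdef
  have hAeq : fderiv ℝ (fun x : EuclideanSpace ℝ (Fin N) => F (x, 0)) ωs = A := hA.fderiv
  have hAbij : Function.Bijective A := by rw [hAeq] at hDω; exact hDω
  -- partial derivative in μ
  have hBμ : HasFDerivAt (fun t : ℝ => F (ωs, t))
      (L.comp (ContinuousLinearMap.inr ℝ (EuclideanSpace ℝ (Fin N)) ℝ)) 0 :=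
    hFd.comp 0 (hasFDerivAt_prodMk_right ωs (0 : ℝ))
  have hb : L (0, 1) ≠ 0 := by
    have h := hBμ.fderiv
    rw [h] at hDμ
    simpa using hDμ
  -- the inverse of A as a continuous linear equiv
  have hAbij' : Function.Bijective (A.toLinearMap) := hAbij
  set eL : EuclideanSpace ℝ (Fin N) ≃ₗ[ℝ] EuclideanSpace ℝ (Fin N) :=
    LinearEquiv.ofBijective A.toLinearMap hAbij' with heLdef
  set e : EuclideanSpace ℝ (Fin N) ≃L[ℝ] EuclideanSpace ℝ (Fin N) :=
    eL.toContinuousLinearEquiv with hedef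
  have he_apply : ∀ x, e x = A x := fun x => rfl
  have he_inv : ∀ x, e.symm (A x) = x := by
    intro x
    rw [← he_apply x]
    exact e.symm_apply_apply x
  set B : EuclideanSpace ℝ (Fin N) →L[ℝ] EuclideanSpace ℝ (Fin N) :=
    (e.symm : EuclideanSpace ℝ (Fin N) →L[ℝ] EuclideanSpace ℝ (Fin N)) with hBdef
  set C : ℝ := ‖B‖ + 1 with hCdef
  have hC0 : 0 < C := by
    have := norm_nonneg B
    rw [hCdef]; linarith
  have hCle : ∀ y, ‖e.symm y‖ ≤ C * ‖y‖ := by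
    intro y
    have h1 : ‖B y‖ ≤ ‖B‖ * ‖y‖ := B.le_opNorm y
    have h2 : ‖B‖ * ‖y‖ ≤ C * ‖y‖ := by
      apply mul_le_mul_of_nonneg_right _ (norm_nonneg y)
      rw [hCdef]; linarith
    exact le_trans h1 h2
  set v : EuclideanSpace ℝ (Fin N) := e.symm (L (0, 1)) with hvdef
  have hv : v ≠ 0 := by
    intro h
    apply hb
    have h2 := congrArg e h
    rw [hvdef] at h2
    rw [e.apply_symm_apply] at h2
    simpa using h2
  set m : ℝ := ‖v‖ with hmdef
  have hm : 0 < m := norm_pos_iff.mpr hv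
  -- key algebraic identity
  have hkey : ∀ (δ : EuclideanSpace ℝ (Fin N)) (t : ℝ),
      e.symm (L (δ, t)) = δ + t • v := by
    intro δ t
    have hsplit : ((δ, t) : EuclideanSpace ℝ (Fin N) × ℝ) = (δ, 0) + (0, t) := by simp
    have h2 : (((0 : EuclideanSpace ℝ (Fin N)), t) : EuclideanSpace ℝ (Fin N) × ℝ)
        = t • (0, (1:ℝ)) := by simp
    have h3 : L (δ, t) = A δ + t • L (0, 1) := by
      rw [hsplit, map_add, h2, map_smul]
      rfl
    rw [h3, map_add, map_smul, he_inv]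
  clear_value B C v m
  -- choose η
  set η : ℝ := min (1 / (2 * C)) (m / (4 * C)) with hηdef
  have hη0 : 0 < η := lt_min (by positivity) (by positivity)
  have hCη1 : C * η ≤ 1 / 2 := by
    have h := min_le_left (1 / (2 * C)) (m / (4 * C))
    calc C * η ≤ C * (1 / (2 * C)) := mul_le_mul_of_nonneg_left h hC0.le
      _ = 1 / 2 := by field_simp; try ring
  have hCη2 : C * η ≤ m / 4 := by
    have h := min_le_right (1 / (2 * C)) (m / (4 * C))
    calc C * η ≤ C * (m / (4 * C)) := mul_le_mul_of_nonneg_left h hC0.le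
      _ = m / 4 := by field_simp
  clear_value η
  -- eventual bounds
  have hp : Tendsto (fun k => ((ω (k + 1), μ k) : EuclideanSpace ℝ (Fin N) × ℝ))
      atTop (𝓝 p₀) := by
    apply Tendsto.prodMk_nhds
    · exact hωconv.comp (tendsto_add_atTop_nat 1)
    · exact hμconv
  have hlo := hFd.isLittleO
  rw [Asymptotics.isLittleO_iff] at hlo
  have hlo' := hp.eventually (hlo hη0)
  have hεabs : Tendsto (fun k => |ε k|) atTop (𝓝 0) := by
    have := hε.abs; simpa using this
  have hεsmall : ∀ᶠ k in atTop, |ε k| < m / (4 * C) :=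
    hεabs.eventually_lt_const (by positivity)
  have hall : ∀ᶠ k in atTop,
      ‖F (ω (k + 1), μ k) - F p₀ - L ((ω (k + 1), μ k) - p₀)‖ ≤
        η * ‖((ω (k + 1), μ k) : EuclideanSpace ℝ (Fin N) × ℝ) - p₀‖ ∧
        |ε k| < m / (4 * C) :=
    hlo'.and hεsmall
  obtain ⟨K, hK⟩ := eventually_atTop.mp hall
  refine ⟨m / 3, 3 * m, by positivity, by linarith only [hm], K, ?_⟩
  intro k hk
  obtain ⟨hok, hεk⟩ := hK k hk
  set δ : EuclideanSpace ℝ (Fin N) := ω (k + 1) - ωs with hδdef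
  clear_value δ
  have hμk := hμpos k
  have hdiffp : ((ω (k + 1), μ k) : EuclideanSpace ℝ (Fin N) × ℝ) - p₀ = (δ, μ k) := by
    rw [hp₀def, hδdef]
    simp [Prod.ext_iff]
  have hnp : ‖((ω (k + 1), μ k) : EuclideanSpace ℝ (Fin N) × ℝ) - p₀‖ ≤ ‖δ‖ + μ k := by
    rw [hdiffp]
    have h1 : ‖((δ, μ k) : EuclideanSpace ℝ (Fin N) × ℝ)‖ = max ‖δ‖ ‖μ k‖ := rfl
    rw [h1]
    apply max_le
    · linarith [norm_nonneg δ]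
    · rw [Real.norm_eq_abs, abs_of_pos hμk]; linarith [norm_nonneg δ]
  have hok' : ‖F (ω (k + 1), μ k) - L (δ, μ k)‖ ≤ η * (‖δ‖ + μ k) := by
    rw [hF0] at hok
    calc ‖F (ω (k + 1), μ k) - L (δ, μ k)‖
        = ‖F (ω (k + 1), μ k) - 0 - L ((ω (k + 1), μ k) - p₀)‖ := by rw [sub_zero, hdiffp]
      _ ≤ η * ‖((ω (k + 1), μ k) : EuclideanSpace ℝ (Fin N) × ℝ) - p₀‖ := hok
      _ ≤ η * (‖δ‖ + μ k) := mul_le_mul_of_nonneg_left hnp hη0.le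
  have hFbound : ‖F (ω (k + 1), μ k)‖ ≤ |ε k| * μ k := by
    calc ‖F (ω (k + 1), μ k)‖ ≤ ε k * μ k := hres k
      _ ≤ |ε k| * μ k := mul_le_mul_of_nonneg_right (le_abs_self _) hμk.le
  have hLb : ‖L (δ, μ k)‖ ≤ |ε k| * μ k + η * (‖δ‖ + μ k) := by
    calc ‖L (δ, μ k)‖ = ‖F (ω (k + 1), μ k) - (F (ω (k + 1), μ k) - L (δ, μ k))‖ := by
          congr 1; abel
      _ ≤ ‖F (ω (k + 1), μ k)‖ + ‖F (ω (k + 1), μ k) - L (δ, μ k)‖ := norm_sub_le _ _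
      _ ≤ |ε k| * μ k + η * (‖δ‖ + μ k) := add_le_add hFbound hok'
  have hmain : ‖δ + μ k • v‖ ≤ C * (|ε k| * μ k + η * (‖δ‖ + μ k)) := by
    rw [← hkey δ (μ k)]
    calc ‖e.symm (L (δ, μ k))‖ ≤ C * ‖L (δ, μ k)‖ := hCle _
      _ ≤ C * (|ε k| * μ k + η * (‖δ‖ + μ k)) :=
          mul_le_mul_of_nonneg_left hLb hC0.le
  have hCε : C * (|ε k| * μ k) ≤ m / 4 * μ k := by
    have h1 : C * |ε k| ≤ m / 4 := by
      have h2 := mul_le_mul_of_nonneg_left hεk.le hC0.le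
      calc C * |ε k| ≤ C * (m / (4 * C)) := h2
        _ = m / 4 := by field_simp
    calc C * (|ε k| * μ k) = (C * |ε k|) * μ k := by ring
      _ ≤ m / 4 * μ k := mul_le_mul_of_nonneg_right h1 hμk.le
  have hmain' : ‖δ + μ k • v‖ ≤ (1 / 2) * ‖δ‖ + (m / 2) * μ k := by
    have h1 : C * (η * ‖δ‖) ≤ (1 / 2) * ‖δ‖ := by
      calc C * (η * ‖δ‖) = (C * η) * ‖δ‖ := by ring
        _ ≤ (1 / 2) * ‖δ‖ := mul_le_mul_of_nonneg_right hCη1 (norm_nonneg δ)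
    have h2 : C * (η * μ k) ≤ (m / 4) * μ k := by
      calc C * (η * μ k) = (C * η) * μ k := by ring
        _ ≤ (m / 4) * μ k := mul_le_mul_of_nonneg_right hCη2 hμk.le
    have hexp : C * (|ε k| * μ k + η * (‖δ‖ + μ k)) =
        C * (|ε k| * μ k) + C * (η * ‖δ‖) + C * (η * μ k) := by ring
    linarith only [hmain, hexp, hCε, h1, h2]
  have hμv : ‖μ k • v‖ = μ k * m := by
    rw [norm_smul, Real.norm_eq_abs, abs_of_pos hμk, ← hmdef]
  constructor
  · have h1 : ‖μ k • v‖ ≤ ‖δ + μ k • v‖ + ‖δ‖ := by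
      calc ‖μ k • v‖ = ‖(δ + μ k • v) - δ‖ := by congr 1; abel
        _ ≤ ‖δ + μ k • v‖ + ‖δ‖ := norm_sub_le _ _
    rw [hμv] at h1
    linarith only [h1, hmain', norm_nonneg δ]
  · have h1 : ‖δ‖ ≤ ‖δ + μ k • v‖ + ‖μ k • v‖ := by
      calc ‖δ‖ = ‖(δ + μ k • v) - μ k • v‖ := by congr 1; abel
        _ ≤ ‖δ + μ k • v‖ + ‖μ k • v‖ := norm_sub_le _ _
    rw [hμv] at h1
    linarith only [h1, hmain']
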